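/- arXiv:1909.02539 — 2 statements merged into one kernel-verified Lean document; each statement's English description precedes it below -/
import Mathlib

section
/- If A ∈ R^{N×N} is symmetric positive definite and Q ∈ R^{N×k} has orthonormal columns, then every eigenvalue of the matrix (Q^T A^{-1} Q)(Q^T A Q) is greater than or equal to 1. -/
open Matrix

/-- Every (real) eigenvalue of `(Qᵀ A⁻¹ Q)(Qᵀ A Q)` is at least `1`, for `A`
symmetric positive definite and `Q` with orthonormal columns. -/
theorem eigenvalues_reduced_preconditioned_ge_one
    (N k : ℕ)
    (A : Matrix (Fin N) (Fin N) ℝ) (hA : A.PosDef)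
    (Q : Matrix (Fin N) (Fin k) ℝ) (hQ : Qᵀ * Q = 1)
    (μ : ℝ) (v : Fin k → ℝ) (hv : v ≠ 0)
    (heig : ((Qᵀ * A⁻¹ * Q) * (Qᵀ * A * Q)).mulVec v = μ • v) :
    1 ≤ μ := by
  classical
  have hAinv : A⁻¹.PosDef := hA.inv
  have hAT : Aᵀ = A := by
    have := hA.isHermitian; rwa [Matrix.IsHermitian, conjTranspose_eq_transpose_of_trivial] at this
  have hAinvT : A⁻¹ᵀ = A⁻¹ := by
    have := hAinv.isHermitian
    rwa [Matrix.IsHermitian, conjTranspose_eq_transpose_of_trivial] at this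
  have hAAinv : A * A⁻¹ = 1 := mul_nonsing_inv A (isUnit_iff_isUnit_det A |>.1 hA.isUnit)
  have hAinvA : A⁻¹ * A = 1 := nonsing_inv_mul A (isUnit_iff_isUnit_det A |>.1 hA.isUnit)
  -- conjugation identity
  have key : ∀ (M : Matrix (Fin N) (Fin N) ℝ) (x y : Fin k → ℝ),
      x ⬝ᵥ (Qᵀ * M * Q) *ᵥ y = (Q *ᵥ x) ⬝ᵥ M *ᵥ (Q *ᵥ y) := by
    intro M x y
    rw [← mulVec_mulVec, ← mulVec_mulVec, dotProduct_mulVec x Qᵀ, vecMul_transpose]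
  have hQinj : ∀ x : Fin k → ℝ, x ≠ 0 → Q *ᵥ x ≠ 0 := by
    intro x hx h
    apply hx
    have := congrArg (fun z => Qᵀ *ᵥ z) h
    simpa [mulVec_mulVec, hQ] using this
  set w : Fin k → ℝ := (Qᵀ * A * Q) *ᵥ v with hw
  set a : ℝ := v ⬝ᵥ w with hadef
  have ha : 0 < a := by
    have := hA.dotProduct_mulVec_pos (hQinj v hv)
    simpa [hadef, hw, key] using this
  have hwne : w ≠ 0 := by
    intro h
    rw [hadef, h, dotProduct_zero] at ha
    exact lt_irrefl 0 ha
  set c : ℝ := w ⬝ᵥ (Qᵀ * A⁻¹ * Q) *ᵥ w with hcdef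
  have hc : 0 < c := by
    have := hAinv.dotProduct_mulVec_pos (hQinj w hwne)
    simpa [hcdef, key] using this
  have hCw : (Qᵀ * A⁻¹ * Q) *ᵥ w = μ • v := by
    rw [hw, mulVec_mulVec, heig]
  have hcμ : c = μ * a := by
    rw [hcdef, hCw, dotProduct_smul, smul_eq_mul, dotProduct_comm, hadef]
  -- the four dot products
  have hQQ : ∀ x y : Fin k → ℝ, (Q *ᵥ x) ⬝ᵥ (Q *ᵥ y) = x ⬝ᵥ y := by
    intro x y
    rw [dotProduct_mulVec, ← mulVec_transpose, mulVec_mulVec, hQ, one_mulVec]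
  have hAinvAv : ∀ z : Fin N → ℝ, A⁻¹ *ᵥ (A *ᵥ z) = z := fun z => by
    rw [mulVec_mulVec, hAinvA, one_mulVec]
  have hAAinvv : ∀ z : Fin N → ℝ, A *ᵥ (A⁻¹ *ᵥ z) = z := fun z => by
    rw [mulVec_mulVec, hAAinv, one_mulVec]
  have comm : ∀ x z : Fin N → ℝ, (A⁻¹ *ᵥ x) ⬝ᵥ z = x ⬝ᵥ A⁻¹ *ᵥ z := by
    intro x z
    nth_rewrite 1 [← hAinvT]
    rw [mulVec_transpose, ← dotProduct_mulVec]
  have e1 : (Q *ᵥ v) ⬝ᵥ A *ᵥ (Q *ᵥ v) = a := by rw [← key, ← hw, ← hadef]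
  have e4 : (Q *ᵥ w) ⬝ᵥ A⁻¹ *ᵥ (Q *ᵥ w) = c := by rw [← key, ← hcdef]
  have e2 : (Q *ᵥ v) ⬝ᵥ A *ᵥ (A⁻¹ *ᵥ (Q *ᵥ w)) = a := by
    rw [hAAinvv, hQQ, ← hadef]
  have e3 : (A⁻¹ *ᵥ (Q *ᵥ w)) ⬝ᵥ A *ᵥ (Q *ᵥ v) = a := by
    rw [comm, hAinvAv, hQQ, dotProduct_comm, ← hadef]
  have e5 : (A⁻¹ *ᵥ (Q *ᵥ w)) ⬝ᵥ A *ᵥ (A⁻¹ *ᵥ (Q *ᵥ w)) = c := by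
    rw [hAAinvv, comm, e4]
  -- positivity of the quadratic at t = a / c
  set y : Fin N → ℝ := Q *ᵥ v - (a / c) • (A⁻¹ *ᵥ (Q *ᵥ w)) with hy
  have h0 : 0 ≤ y ⬝ᵥ A *ᵥ y := by
    have := hA.posSemidef.dotProduct_mulVec_nonneg y
    simpa using this
  have hexp : y ⬝ᵥ A *ᵥ y = a - 2 * (a / c) * a + (a / c) ^ 2 * c := by
    rw [hy]
    simp only [mulVec_sub, mulVec_smul, sub_dotProduct, dotProduct_sub, smul_dotProduct,
      dotProduct_smul, smul_eq_mul, e1, e2, e3, e5]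
    ring
  rw [hexp] at h0
  have hac : a ≤ c := by
    have h1 : a - a ^ 2 / c ≥ 0 := by
      have heq : a - 2 * (a / c) * a + (a / c) ^ 2 * c = a - a ^ 2 / c := by
        field_simp; ring
      linarith [heq ▸ h0]
    have h2 : a ^ 2 ≤ a * c := by
      have h2' : a ^ 2 / c ≤ a := by linarith
      rwa [div_le_iff₀ hc] at h2'
    nlinarith
  nlinarith [hcμ, hac, ha]
end

section
/- If P^T V ∈ R^{(i−1)×(i−1)} is invertible and the new interpolation index p_i satisfies r_{p_i} ≠ 0 where r = v_i − V (P^T V)^{-1} P^T v_i, then the augmented matrix [P, e_{p_i}]^T [V, v_i] ∈ R^{i×i} is invertible. -/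
open Matrix

/-- If `PᵀV` is invertible and the new interpolation index `p_i` satisfies
`r_{p_i} ≠ 0`, where `r = v − V (PᵀV)⁻¹ Pᵀ v`, then the augmented matrix
`[P, e_{p_i}]ᵀ [V, v]` is invertible. -/
theorem deim_augmented_invertible
    (N m : ℕ)
    (p : Fin m → Fin N) (hp : Function.Injective p)
    (P : Matrix (Fin N) (Fin m) ℝ)
    (hP : P = Matrix.of fun i j => if i = p j then (1 : ℝ) else 0)
    (V : Matrix (Fin N) (Fin m) ℝ)
    (hinv : IsUnit (Pᵀ * V).det)
    (v : Fin N → ℝ) (pi : Fin N)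
    (hr : (v - V.mulVec ((Pᵀ * V)⁻¹.mulVec (Pᵀ.mulVec v))) pi ≠ 0)
    (V' : Matrix (Fin N) (Fin (m + 1)) ℝ)
    (hV' : V' = Matrix.of fun i (j : Fin (m + 1)) =>
      if h : (j : ℕ) < m then V i ⟨j, h⟩ else v i)
    (P' : Matrix (Fin N) (Fin (m + 1)) ℝ)
    (hP' : P' = Matrix.of fun i (j : Fin (m + 1)) =>
      if h : (j : ℕ) < m then P i ⟨j, h⟩ else if i = pi then 1 else 0) :
    IsUnit (P'ᵀ * V').det := by
  classical
  set A : Matrix (Fin m) (Fin m) ℝ := Pᵀ * V with hA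
  set B : Matrix (Fin m) (Fin 1) ℝ := Matrix.of fun j _ => Pᵀ.mulVec v j with hB
  set C : Matrix (Fin 1) (Fin m) ℝ := Matrix.of fun _ k => V pi k with hC
  set D : Matrix (Fin 1) (Fin 1) ℝ := Matrix.of fun _ _ => v pi with hD
  have key : (P'ᵀ * V').submatrix finSumFinEquiv finSumFinEquiv
      = Matrix.fromBlocks A B C D := by
    ext a b
    cases a with
    | inl j =>
      cases b with
      | inl k =>
        simp [Matrix.mul_apply, hP', hV', hA, Fin.is_lt]
      | inr k =>
        simp [Matrix.mul_apply, hP', hV', hB, Matrix.mulVec, dotProduct,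
          Fin.is_lt, mul_comm]
    | inr j =>
      have hnot : ¬ ((finSumFinEquiv (Sum.inr j) : Fin (m + 1)) : ℕ) < m := by
        simp [finSumFinEquiv]
      cases b with
      | inl k =>
        simp only [Matrix.submatrix_apply, Matrix.mul_apply, hP', hV',
          Matrix.fromBlocks_apply₂₁, hC, Matrix.transpose_apply, Matrix.of_apply,
          dif_neg hnot, dif_pos (Fin.is_lt _)]
        rw [Finset.sum_eq_single pi] <;> simp (config := {contextual := true}) [Fin.is_lt]
      | inr k =>
        simp only [Matrix.submatrix_apply, Matrix.mul_apply, hP', hV',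
          Matrix.fromBlocks_apply₂₂, hD, Matrix.transpose_apply, Matrix.of_apply,
          dif_neg hnot]
        rw [Finset.sum_eq_single pi] <;> simp (config := {contextual := true})
  have hdet : (P'ᵀ * V').det = (Matrix.fromBlocks A B C D).det := by
    rw [← key, Matrix.det_submatrix_equiv_self]
  haveI : Invertible A := A.invertibleOfIsUnitDet hinv
  rw [hdet, Matrix.det_fromBlocks₁₁]
  apply hinv.mul
  rw [Matrix.det_fin_one]
  apply isUnit_iff_ne_zero.mpr
  have hschur : (D - C * ⅟A * B) 0 0
      = (v - V.mulVec ((Pᵀ * V)⁻¹.mulVec (Pᵀ.mulVec v))) pi := by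
    rw [Matrix.invOf_eq_nonsing_inv]
    simp only [Matrix.sub_apply, Matrix.mul_apply, hB, hC, hD, Matrix.of_apply,
      Pi.sub_apply, Matrix.mulVec, dotProduct, ← hA]
    congr 1
    simp only [Finset.sum_mul, Finset.mul_sum, mul_assoc]
    conv_rhs => rw [Finset.sum_comm]
    apply Finset.sum_congr rfl
    intro b _
    rw [Finset.sum_comm]

  rw [hschur]
  exact hr
end
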